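/- Let 1 → Γ' → Γ → Γ'' be an exact sequence of groups. Suppose that Γ'' is strongly Jordan (Jordan and there is a constant r such that every finite subgroup of Γ'' is generated by at most r elements) and that Γ' has bounded finite subgroups. Then Γ is Jordan. -/

import Mathlib

open Subgroup

section Aux

variable {G M : Type*} [Group G] [Group M]

/-- If all elements of `H` commute modulo `ker φ`, then for `y ∈ H` the centralizer of `y`
has relative index in `H` at most `Nat.card φ.ker`. -/
lemma aux_centralizer_relindex (φ : G →* M) [Finite φ.ker] (H : Subgroup G)
    (hcomm : ∀ a b : H, φ ↑a * φ ↑b = φ ↑b * φ ↑a) (y : G) (hy : y ∈ H) :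
    (Subgroup.centralizer {y}).relIndex H ≤ Nat.card φ.ker := by
  set K' : Subgroup H := (Subgroup.centralizer {y}).subgroupOf H with hK'
  have hfn : ∀ c : H, (c : G) * y * (c : G)⁻¹ * y⁻¹ ∈ φ.ker := by
    intro c
    have h := hcomm c ⟨y, hy⟩
    simp only [MonoidHom.mem_ker, map_mul, map_inv]
    rw [h]
    group
  let f : H → φ.ker := fun c => ⟨(c : G) * y * (c : G)⁻¹ * y⁻¹, hfn c⟩
  have wd : ∀ a b : H, (QuotientGroup.leftRel K') a b → f a = f b := by
    intro a b hab
    rw [QuotientGroup.leftRel_apply] at hab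
    rw [Subgroup.mem_subgroupOf] at hab
    have hz : y * ((a : G)⁻¹ * (b : G)) = ((a : G)⁻¹ * (b : G)) * y := by
      have := hab
      rw [Subgroup.mem_centralizer_iff] at this
      exact this y rfl
    have key : (b : G) * y * (b : G)⁻¹ = (a : G) * y * (a : G)⁻¹ := by
      have h1 : (b : G) = (a : G) * ((a : G)⁻¹ * (b : G)) := by group
      calc (b : G) * y * (b : G)⁻¹
          = (a : G) * (((a : G)⁻¹ * (b : G)) * y * ((a : G)⁻¹ * (b : G))⁻¹) * (a : G)⁻¹ := by
            rw [← mul_assoc, ← mul_assoc, ← h1]; group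
        _ = (a : G) * y * (a : G)⁻¹ := by rw [← hz]; group
    apply Subtype.ext
    show (a : G) * y * (a : G)⁻¹ * y⁻¹ = (b : G) * y * (b : G)⁻¹ * y⁻¹
    rw [key]
  let F : (H ⧸ K') → φ.ker := Quotient.lift f wd
  have hFinj : Function.Injective F := by
    intro q1 q2
    induction q1 using Quotient.ind
    induction q2 using Quotient.ind
    rename_i a b
    intro h
    have h2 : (a : G) * y * (a : G)⁻¹ * y⁻¹ = (b : G) * y * (b : G)⁻¹ * y⁻¹ :=
      congrArg Subtype.val (h : f a = f b)
    have h3 : (a : G) * y * (a : G)⁻¹ = (b : G) * y * (b : G)⁻¹ :=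
      mul_right_cancel h2
    have hmem' : a⁻¹ * b ∈ K' := by
      rw [Subgroup.mem_subgroupOf, Subgroup.mem_centralizer_iff]
      intro w hw
      have hw' : w = y := hw
      rw [hw']
      show y * ((a⁻¹ * b : H) : G) = ((a⁻¹ * b : H) : G) * y
      push_cast
      calc y * ((a : G)⁻¹ * (b : G))
          = (a : G)⁻¹ * ((a : G) * y * (a : G)⁻¹) * (b : G) := by group
        _ = (a : G)⁻¹ * ((b : G) * y * (b : G)⁻¹) * (b : G) := by rw [h3]
        _ = (a : G)⁻¹ * (b : G) * y := by group
    exact Quotient.sound (QuotientGroup.leftRel_apply.mpr hmem')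
  calc (Subgroup.centralizer {y}).relIndex H = K'.index := rfl
    _ = Nat.card (H ⧸ K') := Subgroup.index_eq_card K'
    _ ≤ Nat.card φ.ker := Nat.card_le_card_of_injective F hFinj

lemma aux_iInf_relindex (H : Subgroup G) {B : ℕ} (hB1 : 1 ≤ B) :
    ∀ T : Finset G, (∀ y ∈ T, (Subgroup.centralizer {y}).relIndex H ≤ B) →
      (⨅ y ∈ T, Subgroup.centralizer {y}).relIndex H ≤ B ^ T.card := by
  classical
  intro T
  induction T using Finset.induction_on with
  | empty => intro _; simp [Subgroup.relIndex_top_left]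
  | insert a s hnotmem ih =>
    intro hmem
    have h1 : (⨅ y ∈ insert a s, Subgroup.centralizer {y}) =
        Subgroup.centralizer {a} ⊓ ⨅ y ∈ s, Subgroup.centralizer {y} := by
      exact Finset.iInf_insert a s _
    rw [h1]
    calc (Subgroup.centralizer {a} ⊓ ⨅ y ∈ s, Subgroup.centralizer {y}).relIndex H
        ≤ (Subgroup.centralizer {a}).relIndex H *
          (⨅ y ∈ s, Subgroup.centralizer {y}).relIndex H := Subgroup.relIndex_inf_le
      _ ≤ B * B ^ s.card := Nat.mul_le_mul (hmem a (Finset.mem_insert_self a s))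
          (ih fun y hy => hmem y (Finset.mem_insert_of_mem hy))
      _ = B ^ (insert a s).card := by
          rw [Finset.card_insert_of_notMem hnotmem, pow_succ, mul_comm]

lemma aux_normalCore_index [Finite G] (A : Subgroup G) :
    A.normalCore.index ≤ Nat.factorial A.index := by
  classical
  rw [Subgroup.normalCore_eq_ker, Subgroup.index_ker]
  haveI : Fintype (G ⧸ A) := Fintype.ofFinite _
  calc Nat.card (MulAction.toPermHom G (G ⧸ A)).range
      ≤ Nat.card (Equiv.Perm (G ⧸ A)) :=
        Nat.card_le_card_of_injective _ Subtype.val_injective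
    _ = Nat.factorial A.index := by
        rw [Nat.card_eq_fintype_card, Fintype.card_perm, Subgroup.index_eq_card,
          Nat.card_eq_fintype_card]

end Aux


/-- A group is *Jordan* if there is a constant `J` such that every finite subgroup
contains a normal abelian subgroup of index at most `J`. -/
def IsJordanGroup (Γ : Type*) [Group Γ] : Prop :=
  ∃ J : ℕ, 0 < J ∧ ∀ G : Subgroup Γ, Finite G →
    ∃ A : Subgroup G, A.Normal ∧ (∀ a b : A, a * b = b * a) ∧ A.index ≤ J

/-- A group has *bounded finite subgroups* if there is a constant `B` bounding
the order of every finite subgroup. -/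
def HasBoundedFiniteSubgroups (Γ : Type*) [Group Γ] : Prop :=
  ∃ B : ℕ, ∀ G : Subgroup Γ, Finite G → Nat.card G ≤ B

/-- A group is *strongly Jordan* if it is Jordan and there is a constant `r` such that
every finite subgroup is generated by at most `r` elements. -/
def IsStronglyJordanGroup (Γ : Type*) [Group Γ] : Prop :=
  IsJordanGroup Γ ∧ ∃ r : ℕ, ∀ G : Subgroup Γ, Finite G →
    ∃ S : Finset Γ, S.card ≤ r ∧ Subgroup.closure (S : Set Γ) = G

/-- Lemma 2.2: given an exact sequence `1 → Γ' → Γ → Γ''` with `Γ''` strongly Jordan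
and `Γ'` having bounded finite subgroups, the group `Γ` is Jordan. -/
theorem stmt_1 {Γ' Γ Γ'' : Type*} [Group Γ'] [Group Γ] [Group Γ'']
    (f : Γ' →* Γ) (g : Γ →* Γ'')
    (hf : Function.Injective f) (hexact : f.range = g.ker)
    (hsj : IsStronglyJordanGroup Γ'')
    (hbfs : HasBoundedFiniteSubgroups Γ') :
    IsJordanGroup Γ := by
  classical
  obtain ⟨⟨J, hJpos, hJordan⟩, r, hr⟩ := hsj
  obtain ⟨B, hB⟩ := hbfs
  have hB1 : 1 ≤ B := by
    have := hB ⊥ inferInstance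
    simpa using this
  refine ⟨Nat.factorial (B ^ (r + B) * J), Nat.factorial_pos _, ?_⟩
  intro G hG
  haveI : Finite G := hG
  haveI : Fintype G := Fintype.ofFinite _
  set φ : G →* Γ'' := g.comp G.subtype with hφ
  set K : Subgroup G := φ.ker with hK
  -- `K` is (isomorphic to) a finite subgroup of `Γ'`, so its order is at most `B`
  have hcardK : Nat.card K ≤ B := by
    set K2 : Subgroup Γ := Subgroup.map G.subtype K with hK2
    set K1 : Subgroup Γ' := Subgroup.comap f K2 with hK1
    have hsurj2 : Function.Surjective (fun k : K => (⟨↑k, ⟨k, k.2, rfl⟩⟩ : K2)) := by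
      rintro ⟨x, k, hk, rfl⟩
      exact ⟨⟨k, hk⟩, rfl⟩
    haveI : Finite K2 := Finite.of_surjective _ hsurj2
    have hfn : ∀ x : K1, (f x : Γ) ∈ K2 := fun x => x.2
    have hbij : Function.Bijective (fun x : K1 => (⟨f x, hfn x⟩ : K2)) := by
      constructor
      · intro x y hxy
        apply Subtype.ext
        apply hf
        exact congrArg Subtype.val hxy
      · rintro ⟨x, hx⟩
        have hxker : x ∈ g.ker := by
          obtain ⟨k, hk, rfl⟩ := hx
          have : φ k = 1 := hk
          simpa [hφ] using this
        rw [← hexact] at hxker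
        obtain ⟨y, rfl⟩ := hxker
        exact ⟨⟨y, hx⟩, rfl⟩
    haveI : Finite K1 := Finite.of_injective _ hbij.1
    have e1 : Nat.card K1 = Nat.card K2 := Nat.card_eq_of_bijective _ hbij
    have e2 : Nat.card K = Nat.card K2 := by
      have hsinj : Function.Injective G.subtype := Subtype.val_injective
      exact Nat.card_congr (Subgroup.equivMapOfInjective K G.subtype hsinj).toEquiv
    rw [e2, ← e1]
    exact hB K1 inferInstance
  -- the image of `G` in `Γ''`
  set Q : Subgroup Γ'' := φ.range with hQ
  haveI : Finite Q := Finite.of_surjective φ.rangeRestrict φ.rangeRestrict_surjective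
  obtain ⟨A'', hA''norm, hA''comm, hA''idx⟩ := hJordan Q inferInstance
  set H : Subgroup G := Subgroup.comap φ.rangeRestrict A'' with hH
  have hHidx : H.index ≤ J := by
    rw [hH, Subgroup.index_comap_of_surjective _ φ.rangeRestrict_surjective]
    exact hA''idx
  have hKH : K ≤ H := by
    intro x hx
    have : φ.rangeRestrict x = 1 := by
      apply Subtype.ext
      simpa [hK] using hx
    rw [hH, Subgroup.mem_comap, this]
    exact A''.one_mem
  -- all elements of `H` commute modulo `K = ker φ`
  have hHcomm : ∀ a b : H, φ ↑a * φ ↑b = φ ↑b * φ ↑a := by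
    intro a b
    have ha : φ.rangeRestrict ↑a ∈ A'' := a.2
    have hb : φ.rangeRestrict ↑b ∈ A'' := b.2
    have h := hA''comm ⟨_, ha⟩ ⟨_, hb⟩
    have h' := congrArg (fun z : A'' => ((z : Q) : Γ'')) h
    simpa using h'
  -- a small generating set for `H`
  set A2 : Subgroup Γ'' := Subgroup.map Q.subtype A'' with hA2
  haveI : Finite A2 := by
    have : Function.Surjective (fun a : A'' => (⟨↑↑a, ⟨a, a.2, rfl⟩⟩ : A2)) := by
      rintro ⟨x, q, hq, rfl⟩
      exact ⟨⟨q, hq⟩, rfl⟩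
    exact Finite.of_surjective _ this
  obtain ⟨S, hScard, hSclos⟩ := hr A2 inferInstance
  set l : Γ'' → G := fun s =>
    if h : ∃ x : G, x ∈ H ∧ φ x = s then h.choose else 1 with hl
  have hlH : ∀ s, l s ∈ H := by
    intro s
    rw [hl]
    by_cases h : ∃ x : G, x ∈ H ∧ φ x = s
    · simp only [dif_pos h]; exact h.choose_spec.1
    · simp only [dif_neg h]; exact H.one_mem
  have hlφ : ∀ s ∈ S, φ (l s) = s := by
    intro s hs
    have hsA2 : s ∈ A2 := by
      rw [← hSclos]
      exact Subgroup.subset_closure hs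
    have hex : ∃ x : G, x ∈ H ∧ φ x = s := by
      obtain ⟨q, hq, rfl⟩ := hsA2
      obtain ⟨x, hx⟩ := φ.rangeRestrict_surjective q
      refine ⟨x, ?_, ?_⟩
      · rw [hH, Subgroup.mem_comap, hx]; exact hq
      · rw [← hx]; rfl
    rw [hl]
    simp only [dif_pos hex]
    exact hex.choose_spec.2
  set TK : Finset G := (K : Set G).toFinset with hTK
  have hTKcard : TK.card ≤ B := by
    rw [hTK, Set.toFinset_card]
    calc Fintype.card (K : Set G) = Nat.card (K : Set G) := (Nat.card_eq_fintype_card).symm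
      _ = Nat.card K := rfl
      _ ≤ B := hcardK
  set T : Finset G := S.image l ∪ TK with hT
  have hTcard : T.card ≤ r + B := by
    calc T.card ≤ (S.image l).card + TK.card := Finset.card_union_le _ _
      _ ≤ S.card + TK.card := Nat.add_le_add_right (Finset.card_image_le) _
      _ ≤ r + B := Nat.add_le_add hScard hTKcard
  have hTH : ∀ y ∈ T, y ∈ H := by
    intro y hy
    rw [hT, Finset.mem_union] at hy
    rcases hy with hy | hy
    · obtain ⟨s, _, rfl⟩ := Finset.mem_image.mp hy
      exact hlH s
    · apply hKH
      rw [hTK, Set.mem_toFinset] at hy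
      exact hy
  -- `H` is contained in the closure of `T`
  have hHclos : H ≤ Subgroup.closure (T : Set G) := by
    intro x hx
    have himg : φ '' (l '' (S : Set Γ'')) = (S : Set Γ'') := by
      rw [Set.image_image]
      calc (fun s => φ (l s)) '' (S : Set Γ'') = id '' (S : Set Γ'') :=
            Set.image_congr fun s hs => hlφ s hs
        _ = (S : Set Γ'') := Set.image_id _
    have hmapD : Subgroup.map φ (Subgroup.closure (l '' (S : Set Γ''))) = A2 := by
      rw [MonoidHom.map_closure, himg, hSclos]
    have hφx : φ x ∈ A2 := by
      rw [hA2]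
      exact ⟨φ.rangeRestrict x, hx, rfl⟩
    rw [← hmapD] at hφx
    obtain ⟨d, hd, hdx⟩ := hφx
    have hdk : d⁻¹ * x ∈ K := by
      rw [hK, MonoidHom.mem_ker, map_mul, map_inv, hdx]
      group
    have hdT : d ∈ Subgroup.closure (T : Set G) := by
      refine Subgroup.closure_mono ?_ hd
      intro z hz
      obtain ⟨s, hs, rfl⟩ := hz
      rw [hT]
      push_cast
      exact Set.mem_union_left _ (Set.mem_image_of_mem l hs)
    have hdkT : d⁻¹ * x ∈ Subgroup.closure (T : Set G) := by
      apply Subgroup.subset_closure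
      rw [hT]
      push_cast
      apply Set.mem_union_right
      rw [hTK]
      push_cast [Set.coe_toFinset]
      exact hdk
    have : x = d * (d⁻¹ * x) := by group
    rw [this]
    exact Subgroup.mul_mem _ hdT hdkT
  -- each centralizer of an element of `T` has small relative index in `H`
  have hcent : ∀ y ∈ T, (Subgroup.centralizer {y}).relIndex H ≤ B := by
    intro y hy
    calc (Subgroup.centralizer {y}).relIndex H ≤ Nat.card φ.ker :=
          aux_centralizer_relindex φ H hHcomm y (hTH y hy)
      _ ≤ B := hcardK
  set A : Subgroup G := (⨅ y ∈ T, Subgroup.centralizer {y}) ⊓ H with hA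
  have hAle : A ≤ H := inf_le_right
  have hArel : A.relIndex H ≤ B ^ (r + B) := by
    rw [hA, Subgroup.inf_relIndex_right]
    calc (⨅ y ∈ T, Subgroup.centralizer {y}).relIndex H ≤ B ^ T.card :=
          aux_iInf_relindex H hB1 T hcent
      _ ≤ B ^ (r + B) := Nat.pow_le_pow_right hB1 hTcard
  have hAidx : A.index ≤ B ^ (r + B) * J := by
    rw [← Subgroup.relIndex_mul_index hAle]
    exact Nat.mul_le_mul hArel hHidx
  refine ⟨A.normalCore, inferInstance, ?_, ?_⟩
  · -- commutativity
    intro a b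
    apply Subtype.ext
    have haA : (a : G) ∈ A := A.normalCore_le a.2
    have hbA : (b : G) ∈ A := A.normalCore_le b.2
    have hacent : (a : G) ∈ ⨅ y ∈ T, Subgroup.centralizer {y} := haA.1
    have hbH : (b : G) ∈ H := hbA.2
    have hTsub : (T : Set G) ⊆ (Subgroup.centralizer {(a : G)} : Set G) := by
      intro y hy
      have hay : (a : G) ∈ Subgroup.centralizer {y} := by
        have := Subgroup.mem_iInf.mp hacent y
        exact (Subgroup.mem_iInf.mp this) hy
      rw [SetLike.mem_coe, Subgroup.mem_centralizer_iff]
      intro w hw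
      have hw' : w = (a : G) := hw
      rw [hw']
      have := (Subgroup.mem_centralizer_iff.mp hay) y rfl
      exact this.symm
    have hbcent : (b : G) ∈ Subgroup.centralizer {(a : G)} :=
      (Subgroup.closure_le _).mpr hTsub (hHclos hbH)
    push_cast
    exact (Subgroup.mem_centralizer_iff.mp hbcent) (a : G) rfl
  · -- index bound
    calc A.normalCore.index ≤ Nat.factorial A.index := aux_normalCore_index A
      _ ≤ Nat.factorial (B ^ (r + B) * J) := Nat.factorial_le hAidx
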